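/- (Lemma L2) Assume ν̄ᵢ > 0 for all i, U positive definite and W positive semidefinite. Suppose there exist a real n×m matrix K̄ and a positive semidefinite n×n matrix S̄ with φ(K̄, S̄) ≺ S̄. Then for every positive semidefinite initial matrix S₀, the sequence S_{k+1} = Π_c(S_k) is bounded: there exists an n×n matrix M_{S₀} such that S_k ⪯ M_{S₀} for all k ∈ ℕ. -/

import Mathlib

open Matrix

/-- The scalar η_I = √(∏_{i∈I} ν̄ᵢ · ∏_{i∉I}(1−ν̄ᵢ)). -/
noncomputable def eta {m : ℕ} (ν : Fin m → ℝ) (I : Finset (Fin m)) : ℝ :=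
  Real.sqrt ((∏ i ∈ I, ν i) * (∏ i ∈ Iᶜ, (1 - ν i)))

/-- The m×m diagonal 0/1 matrix N_I whose i-th diagonal entry is 1 exactly when i ∈ I. -/
def NI {m : ℕ} (I : Finset (Fin m)) : Matrix (Fin m) (Fin m) ℝ :=
  Matrix.diagonal fun i => if i ∈ I then 1 else 0

section scalar
variable {m : ℕ} {ν : Fin m → ℝ} (hν : ∀ i, ν i ∈ Set.Ioc (0 : ℝ) 1)
include hν

lemma eta_sq (I : Finset (Fin m)) :
    (eta ν I) ^ 2 = (∏ i ∈ I, ν i) * (∏ i ∈ Iᶜ, (1 - ν i)) := by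
  apply Real.sq_sqrt
  apply mul_nonneg
  · exact Finset.prod_nonneg fun i _ => (hν i).1.le
  · exact Finset.prod_nonneg fun i _ => by linarith [(hν i).2]

lemma sum_eta_sq : ∑ I : Finset (Fin m), (eta ν I) ^ 2 = 1 := by
  have := Fintype.prod_add ν (fun i => 1 - ν i)
  simp only [add_sub_cancel] at this
  rw [Finset.prod_const_one] at this
  calc ∑ I : Finset (Fin m), (eta ν I) ^ 2
      = ∑ I : Finset (Fin m), (∏ i ∈ I, ν i) * (∏ i ∈ Iᶜ, (1 - ν i)) := by
        exact Finset.sum_congr rfl fun I _ => eta_sq hν I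
    _ = 1 := this.symm

lemma sum_eta_sq_ind (i : Fin m) :
    ∑ I : Finset (Fin m), (eta ν I) ^ 2 * (if i ∈ I then 1 else 0) = ν i := by
  have key := Fintype.prod_add ν (fun j => if j = i then 0 else 1 - ν j)
  have lhs : ∏ j, (ν j + if j = i then 0 else 1 - ν j) = ν i := by
    rw [Fintype.prod_eq_single i (fun j hj => by simp [hj])]
    simp
  rw [lhs] at key
  rw [key]
  apply Finset.sum_congr rfl
  intro I _
  rw [eta_sq hν I]
  by_cases hi : i ∈ I
  · simp only [hi, if_true, mul_one]
    congr 1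
    apply Finset.prod_congr rfl
    intro j hj
    have : j ≠ i := by rintro rfl; simp [hi] at hj
    simp [this]
  · simp only [hi, if_false, mul_zero]
    have hic : i ∈ Iᶜ := Finset.mem_compl.mpr hi
    rw [eq_comm, mul_eq_zero]
    right
    exact Finset.prod_eq_zero hic (by simp)

end scalar

section matrixbasics
variable {k : ℕ}

lemma psd_smul {A : Matrix (Fin k) (Fin k) ℝ} (hA : A.PosSemidef) {a : ℝ} (ha : 0 ≤ a) :
    (a • A).PosSemidef := by
  refine ⟨?_, fun x => ?_⟩
  · unfold Matrix.IsHermitian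
    rw [conjTranspose_smul, hA.1]
    simp
  · exact (hA.smul ha).2 x

lemma pd_smul {A : Matrix (Fin k) (Fin k) ℝ} (hA : A.PosDef) {a : ℝ} (ha : 0 < a) :
    (a • A).PosDef := by
  refine ⟨?_, fun x hx => ?_⟩
  · unfold Matrix.IsHermitian
    rw [conjTranspose_smul, hA.1]
    simp
  · exact (hA.smul ha).2 hx

lemma psd_sum {ι : Type*} (s : Finset ι) (f : ι → Matrix (Fin k) (Fin k) ℝ)
    (h : ∀ i ∈ s, (f i).PosSemidef) : (∑ i ∈ s, f i).PosSemidef := by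
  classical
  induction s using Finset.induction_on with
  | empty => simpa using Matrix.PosSemidef.zero
  | insert _ _ hnotmem ih =>
    rw [Finset.sum_insert hnotmem]
    exact (h _ (Finset.mem_insert_self _ _)).add
      (ih fun i hi => h i (Finset.mem_insert_of_mem hi))

lemma psd_congr {A : Matrix (Fin k) (Fin k) ℝ} (hA : A.PosSemidef)
    {l : ℕ} (C : Matrix (Fin l) (Fin k) ℝ) : (C * A * Cᵀ).PosSemidef := by
  have := hA.mul_mul_conjTranspose_same C
  rwa [conjTranspose_eq_transpose_of_trivial] at this

end matrixbasics

section etaNI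
variable {m : ℕ} {ν : Fin m → ℝ} (hν : ∀ i, ν i ∈ Set.Ioc (0 : ℝ) 1)

lemma NI_transpose (I : Finset (Fin m)) : (NI I)ᵀ = NI I := Matrix.diagonal_transpose _

include hν in
lemma sum_eta_sq_NI : ∑ I : Finset (Fin m), (eta ν I) ^ 2 • NI I = Matrix.diagonal ν := by
  ext i j
  rw [Matrix.sum_apply]
  by_cases hij : i = j
  · subst hij
    simp only [Matrix.smul_apply, NI, Matrix.diagonal_apply_eq, smul_eq_mul]
    exact sum_eta_sq_ind hν i
  · simp [Matrix.smul_apply, NI, Matrix.diagonal_apply_ne _ hij]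

end etaNI

/-- φ(K,X) = Σ_{I⊆{1,…,m}} η_I² (F_I(K) X F_I(K)ᵀ + V_I(K)), where
F_I(K) = Aᵀ + K N_I Bᵀ and V_I(K) = W + K N_I U N_I Kᵀ. -/
noncomputable def phi {m n : ℕ} (ν : Fin m → ℝ) (A W : Matrix (Fin n) (Fin n) ℝ)
    (B : Matrix (Fin n) (Fin m) ℝ) (U : Matrix (Fin m) (Fin m) ℝ)
    (K : Matrix (Fin n) (Fin m) ℝ) (X : Matrix (Fin n) (Fin n) ℝ) :
    Matrix (Fin n) (Fin n) ℝ :=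
  ∑ I : Finset (Fin m), (eta ν I) ^ 2 •
    ((Aᵀ + K * NI I * Bᵀ) * X * (Aᵀ + K * NI I * Bᵀ)ᵀ + (W + K * NI I * U * NI I * Kᵀ))

/-- M(X) = Σ_{I⊆{1,…,m}} η_I² N_I (U + Bᵀ X B) N_I. -/
noncomputable def Mop {m n : ℕ} (ν : Fin m → ℝ) (B : Matrix (Fin n) (Fin m) ℝ)
    (U : Matrix (Fin m) (Fin m) ℝ) (X : Matrix (Fin n) (Fin n) ℝ) :
    Matrix (Fin m) (Fin m) ℝ :=
  ∑ I : Finset (Fin m), (eta ν I) ^ 2 • (NI I * (U + Bᵀ * X * B) * NI I)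

/-- The modified algebraic Riccati operator
Π_c(X) = Aᵀ X A + W − Aᵀ X B N̄ M(X)⁻¹ N̄ Bᵀ X A, where N̄ = diag(ν̄₁,…,ν̄ₘ). -/
noncomputable def Pic {m n : ℕ} (ν : Fin m → ℝ) (A W : Matrix (Fin n) (Fin n) ℝ)
    (B : Matrix (Fin n) (Fin m) ℝ) (U : Matrix (Fin m) (Fin m) ℝ)
    (X : Matrix (Fin n) (Fin n) ℝ) : Matrix (Fin n) (Fin n) ℝ :=
  Aᵀ * X * A + W -
    Aᵀ * X * B * Matrix.diagonal ν * (Mop ν B U X)⁻¹ * Matrix.diagonal ν * Bᵀ * X * A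

section main
variable {m n : ℕ} {ν : Fin m → ℝ} (hν : ∀ i, ν i ∈ Set.Ioc (0 : ℝ) 1)
  (A W : Matrix (Fin n) (Fin n) ℝ)
  (B : Matrix (Fin n) (Fin m) ℝ) (U : Matrix (Fin m) (Fin m) ℝ)

include hν in
lemma phi_expand (K : Matrix (Fin n) (Fin m) ℝ) (X : Matrix (Fin n) (Fin n) ℝ) :
    phi ν A W B U K X = Aᵀ * X * A + W + Aᵀ * X * B * Matrix.diagonal ν * Kᵀ
      + K * (Matrix.diagonal ν * (Bᵀ * X * A)) + K * Mop ν B U X * Kᵀ := by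
  have step : ∀ I : Finset (Fin m),
      (eta ν I) ^ 2 • ((Aᵀ + K * NI I * Bᵀ) * X * (Aᵀ + K * NI I * Bᵀ)ᵀ
        + (W + K * NI I * U * NI I * Kᵀ))
      = (eta ν I) ^ 2 • (Aᵀ * X * A + W)
        + Aᵀ * X * B * ((eta ν I) ^ 2 • NI I) * Kᵀ
        + K * ((eta ν I) ^ 2 • NI I) * (Bᵀ * X * A)
        + K * ((eta ν I) ^ 2 • (NI I * (U + Bᵀ * X * B) * NI I)) * Kᵀ := by
    intro I
    rw [transpose_add, transpose_mul, transpose_mul, transpose_transpose,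
      transpose_transpose, NI_transpose]
    simp only [Matrix.mul_smul, Matrix.smul_mul, ← smul_add]
    congr 1
    simp only [Matrix.add_mul, Matrix.mul_add, Matrix.mul_assoc]
    abel
  rw [phi]
  simp_rw [step]
  rw [Finset.sum_add_distrib, Finset.sum_add_distrib, Finset.sum_add_distrib,
    ← Finset.sum_smul, sum_eta_sq hν, one_smul]
  congr 1
  · congr 1
    · congr 1
      rw [← Matrix.sum_mul, ← Matrix.mul_sum, sum_eta_sq_NI hν, Matrix.mul_assoc,
        Matrix.mul_assoc, Matrix.mul_assoc]
    · rw [← Matrix.sum_mul, ← Matrix.mul_sum, sum_eta_sq_NI hν, Matrix.mul_assoc]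
  · rw [← Matrix.sum_mul, ← Matrix.mul_sum, Mop]

include hν in
lemma Mop_posDef (hU : U.PosDef) {X : Matrix (Fin n) (Fin n) ℝ} (hX : X.PosSemidef) :
    (Mop ν B U X).PosDef := by
  have hBXB : (Bᵀ * X * B).PosSemidef := by
    have := psd_congr hX Bᵀ
    rwa [transpose_transpose] at this
  have hC : (U + Bᵀ * X * B).PosDef := hU.add_posSemidef hBXB
  rw [Mop, ← Finset.add_sum_erase _ _ (Finset.mem_univ (Finset.univ : Finset (Fin m)))]
  apply Matrix.PosDef.add_posSemidef
  · have hNI : NI (Finset.univ : Finset (Fin m)) = 1 := by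
      unfold NI
      simp [Matrix.diagonal_one]
    rw [hNI, Matrix.one_mul, Matrix.mul_one]
    apply pd_smul hC
    rw [eta_sq hν]
    rw [Finset.compl_univ, Finset.prod_empty, mul_one]
    exact Finset.prod_pos fun i _ => (hν i).1
  · apply psd_sum
    intro I _
    apply psd_smul _ (sq_nonneg _)
    have := psd_congr hC.posSemidef (NI I)
    rwa [NI_transpose] at this

include hν in
lemma phi_sq (hU : U.PosDef) (K : Matrix (Fin n) (Fin m) ℝ)
    {X : Matrix (Fin n) (Fin n) ℝ} (hX : X.PosSemidef) :
    phi ν A W B U K X = Pic ν A W B U X +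
      (K + Aᵀ * X * B * Matrix.diagonal ν * (Mop ν B U X)⁻¹) * Mop ν B U X *
      (K + Aᵀ * X * B * Matrix.diagonal ν * (Mop ν B U X)⁻¹)ᵀ := by
  have hXsym : Xᵀ = X := by
    have := hX.isHermitian
    rwa [← conjTranspose_eq_transpose_of_trivial]
  have hM : (Mop ν B U X).PosDef := Mop_posDef hν B U hU hX
  set M := Mop ν B U X with hMdef
  set G := Aᵀ * X * B * Matrix.diagonal ν with hGdef
  have hMsym : Mᵀ = M := by
    have := hM.isHermitian
    rwa [← conjTranspose_eq_transpose_of_trivial]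
  have hdet : IsUnit M.det := (Matrix.isUnit_iff_isUnit_det _).mp hM.isUnit
  have hMinv : M * M⁻¹ = 1 := Matrix.mul_nonsing_inv _ hdet
  have hMinv' : M⁻¹ * M = 1 := Matrix.nonsing_inv_mul _ hdet
  have hMinvsym : (M⁻¹)ᵀ = M⁻¹ := by
    rw [Matrix.transpose_nonsing_inv, hMsym]
  have h1 : ∀ (Z : Matrix (Fin m) (Fin n) ℝ), M * (M⁻¹ * Z) = Z := fun Z => by
    rw [← Matrix.mul_assoc, hMinv, Matrix.one_mul]
  have h2 : ∀ (Z : Matrix (Fin m) (Fin n) ℝ), M⁻¹ * (M * Z) = Z := fun Z => by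
    rw [← Matrix.mul_assoc, hMinv', Matrix.one_mul]
  have hGT : Gᵀ = Matrix.diagonal ν * (Bᵀ * X * A) := by
    rw [hGdef, transpose_mul, transpose_mul, transpose_mul, transpose_transpose,
      Matrix.diagonal_transpose, hXsym]
    simp only [Matrix.mul_assoc]
  have sq : (K + G * M⁻¹) * M * (K + G * M⁻¹)ᵀ
      = K * M * Kᵀ + K * Gᵀ + G * Kᵀ + G * (M⁻¹ * Gᵀ) := by
    rw [transpose_add, transpose_mul, hMinvsym]
    simp only [Matrix.add_mul, Matrix.mul_add, Matrix.mul_assoc, h1, h2]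
    abel
  rw [phi_expand hν A W B U K X, Pic, sq, ← hMdef, ← hGdef]
  rw [show G * M⁻¹ * Matrix.diagonal ν * Bᵀ * X * A = G * (M⁻¹ * Gᵀ) from by
    rw [hGT]; simp only [Matrix.mul_assoc]]
  rw [← hGT]
  abel

lemma phi_posSemidef (hW : W.PosSemidef) (hU : U.PosSemidef) (K : Matrix (Fin n) (Fin m) ℝ)
    {X : Matrix (Fin n) (Fin n) ℝ} (hX : X.PosSemidef) :
    (phi ν A W B U K X).PosSemidef := by
  apply psd_sum
  intro I _
  apply psd_smul _ (sq_nonneg _)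
  apply Matrix.PosSemidef.add (psd_congr hX _)
  apply hW.add
  have : K * NI I * U * NI I * Kᵀ = (K * NI I) * U * (K * NI I)ᵀ := by
    rw [transpose_mul, NI_transpose]
    simp only [Matrix.mul_assoc]
  rw [this]
  exact psd_congr hU _

include hν in
lemma phi_sub_Pic (hU : U.PosDef) (K : Matrix (Fin n) (Fin m) ℝ)
    {X : Matrix (Fin n) (Fin n) ℝ} (hX : X.PosSemidef) :
    (phi ν A W B U K X - Pic ν A W B U X).PosSemidef := by
  rw [phi_sq hν A W B U hU K hX, add_sub_cancel_left]
  have := psd_congr (Mop_posDef hν B U hU hX).posSemidef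
    (K + Aᵀ * X * B * Matrix.diagonal ν * (Mop ν B U X)⁻¹)
  exact this

include hν in
lemma Pic_posSemidef (hW : W.PosSemidef) (hU : U.PosDef)
    {X : Matrix (Fin n) (Fin n) ℝ} (hX : X.PosSemidef) :
    (Pic ν A W B U X).PosSemidef := by
  have h := phi_sq hν A W B U hU (-(Aᵀ * X * B * Matrix.diagonal ν * (Mop ν B U X)⁻¹)) hX
  rw [neg_add_cancel] at h
  simp only [Matrix.zero_mul, Matrix.transpose_zero, Matrix.mul_zero, add_zero] at h
  rw [← h]
  exact phi_posSemidef A W B U hW hU.posSemidef _ hX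

lemma phi_monotone (K : Matrix (Fin n) (Fin m) ℝ)
    {X Y : Matrix (Fin n) (Fin n) ℝ} (hXY : (Y - X).PosSemidef) :
    (phi ν A W B U K Y - phi ν A W B U K X).PosSemidef := by
  rw [phi, phi, ← Finset.sum_sub_distrib]
  apply psd_sum
  intro I _
  rw [← smul_sub]
  apply psd_smul _ (sq_nonneg _)
  have : (Aᵀ + K * NI I * Bᵀ) * Y * (Aᵀ + K * NI I * Bᵀ)ᵀ + (W + K * NI I * U * NI I * Kᵀ)
      - ((Aᵀ + K * NI I * Bᵀ) * X * (Aᵀ + K * NI I * Bᵀ)ᵀ + (W + K * NI I * U * NI I * Kᵀ))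
      = (Aᵀ + K * NI I * Bᵀ) * (Y - X) * (Aᵀ + K * NI I * Bᵀ)ᵀ := by
    rw [Matrix.mul_sub, Matrix.sub_mul]
    abel
  rw [this]
  exact psd_congr hXY _

lemma phi_scaling (hW : W.PosSemidef) (hU : U.PosSemidef) (K : Matrix (Fin n) (Fin m) ℝ)
    (X : Matrix (Fin n) (Fin n) ℝ) {α : ℝ} (hα : 1 ≤ α) :
    (α • phi ν A W B U K X - phi ν A W B U K (α • X)).PosSemidef := by
  rw [phi, phi, Finset.smul_sum, ← Finset.sum_sub_distrib]
  apply psd_sum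
  intro I _
  rw [smul_comm]
  rw [← smul_sub]
  apply psd_smul _ (sq_nonneg _)
  have : α • ((Aᵀ + K * NI I * Bᵀ) * X * (Aᵀ + K * NI I * Bᵀ)ᵀ + (W + K * NI I * U * NI I * Kᵀ))
      - ((Aᵀ + K * NI I * Bᵀ) * (α • X) * (Aᵀ + K * NI I * Bᵀ)ᵀ + (W + K * NI I * U * NI I * Kᵀ))
      = (α - 1) • (W + K * NI I * U * NI I * Kᵀ) := by
    rw [smul_add, Matrix.mul_smul, Matrix.smul_mul, sub_smul, one_smul]
    abel
  rw [this]
  apply psd_smul _ (by linarith)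
  apply hW.add
  have h2 : K * NI I * U * NI I * Kᵀ = (K * NI I) * U * (K * NI I)ᵀ := by
    rw [transpose_mul, NI_transpose]
    simp only [Matrix.mul_assoc]
  rw [h2]
  exact psd_congr hU _

end main

section eigen
variable {k : ℕ}

lemma herm_conj_decomp {A : Matrix (Fin k) (Fin k) ℝ} (hA : A.IsHermitian) (c : ℝ) :
    A - c • 1 = (hA.eigenvectorUnitary : Matrix (Fin k) (Fin k) ℝ) *
      Matrix.diagonal (fun i => hA.eigenvalues i - c) *
      (star (hA.eigenvectorUnitary : Matrix (Fin k) (Fin k) ℝ)) := by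
  set V := (hA.eigenvectorUnitary : Matrix (Fin k) (Fin k) ℝ) with hV
  have hVV : V * star V = 1 := (Matrix.mem_unitaryGroup_iff).mp hA.eigenvectorUnitary.2
  have hdiag : Matrix.diagonal (fun i => hA.eigenvalues i - c)
      = Matrix.diagonal (RCLike.ofReal ∘ hA.eigenvalues) - c • 1 := by
    ext i j
    rcases eq_or_ne i j with rfl | h
    · simp [Matrix.one_apply_eq, RCLike.ofReal_real_eq_id]
    · simp [Matrix.diagonal_apply_ne _ h, Matrix.one_apply_ne h]
  have hs := hA.spectral_theorem
  rw [Unitary.conjStarAlgAut_apply, ← hV] at hs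
  rw [hdiag, Matrix.mul_sub, Matrix.sub_mul, ← hs]
  congr 1
  rw [Matrix.mul_smul, Matrix.mul_one, Matrix.smul_mul, hVV]

lemma herm_sub_smul_one {A : Matrix (Fin k) (Fin k) ℝ} (hA : A.IsHermitian) {c : ℝ}
    (hc : ∀ i, c ≤ hA.eigenvalues i) : (A - c • 1).PosSemidef := by
  rw [herm_conj_decomp hA c]
  have hD : (Matrix.diagonal (fun i => hA.eigenvalues i - c)).PosSemidef :=
    Matrix.posSemidef_diagonal_iff.mpr fun i => sub_nonneg.mpr (hc i)
  have := hD.mul_mul_conjTranspose_same (hA.eigenvectorUnitary : Matrix (Fin k) (Fin k) ℝ)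
  rwa [Matrix.star_eq_conjTranspose]

lemma smul_one_sub_herm {A : Matrix (Fin k) (Fin k) ℝ} (hA : A.IsHermitian) {c : ℝ}
    (hc : ∀ i, hA.eigenvalues i ≤ c) : (c • 1 - A).PosSemidef := by
  have : c • (1 : Matrix (Fin k) (Fin k) ℝ) - A = -(A - c • 1) := by abel
  rw [this, herm_conj_decomp hA c]
  have hD : (Matrix.diagonal (fun i => c - hA.eigenvalues i)).PosSemidef :=
    Matrix.posSemidef_diagonal_iff.mpr fun i => sub_nonneg.mpr (hc i)
  have h2 : -((hA.eigenvectorUnitary : Matrix (Fin k) (Fin k) ℝ) *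
      Matrix.diagonal (fun i => hA.eigenvalues i - c) *
      (star (hA.eigenvectorUnitary : Matrix (Fin k) (Fin k) ℝ)))
      = (hA.eigenvectorUnitary : Matrix (Fin k) (Fin k) ℝ) *
      Matrix.diagonal (fun i => c - hA.eigenvalues i) *
      (star (hA.eigenvectorUnitary : Matrix (Fin k) (Fin k) ℝ)) := by
    have hDneg : Matrix.diagonal (fun i => c - hA.eigenvalues i)
        = -Matrix.diagonal (fun i => hA.eigenvalues i - c) := by
      ext i j
      rcases eq_or_ne i j with rfl | h
      · simp [neg_sub]
      · simp [Matrix.diagonal_apply_ne _ h]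
    rw [hDneg, Matrix.mul_neg, Matrix.neg_mul]
  rw [h2]
  have := hD.mul_mul_conjTranspose_same (hA.eigenvectorUnitary : Matrix (Fin k) (Fin k) ℝ)
  rwa [Matrix.star_eq_conjTranspose]

end eigen

/-- Lemma L2: if there exist K̄ and a positive semidefinite S̄ with
φ(K̄, S̄) ≺ S̄, then for every positive semidefinite S₀, the sequence
S_{k+1} = Π_c(S_k) is bounded above in the Loewner order. -/
theorem Pic_iterate_bounded (m n : ℕ) (hm : 0 < m) (hn : 0 < n) (ν : Fin m → ℝ)
    (hν : ∀ i, ν i ∈ Set.Ioc (0 : ℝ) 1)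
    (A W : Matrix (Fin n) (Fin n) ℝ) (B : Matrix (Fin n) (Fin m) ℝ)
    (U : Matrix (Fin m) (Fin m) ℝ) (hW : W.PosSemidef) (hU : U.PosDef)
    (Kbar : Matrix (Fin n) (Fin m) ℝ) (Sbar : Matrix (Fin n) (Fin n) ℝ)
    (hSbar : Sbar.PosSemidef) (hphi : (Sbar - phi ν A W B U Kbar Sbar).PosDef)
    (S₀ : Matrix (Fin n) (Fin n) ℝ) (hS₀ : S₀.PosSemidef) :
    ∃ MS : Matrix (Fin n) (Fin n) ℝ,
      ∀ k : ℕ, (MS - (fun X => Pic ν A W B U X)^[k] S₀).PosSemidef := by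
  have hphiSbar : (phi ν A W B U Kbar Sbar).PosSemidef :=
    phi_posSemidef A W B U hW hU.posSemidef Kbar hSbar
  have hSbarPD : Sbar.PosDef := by
    have hdec : Sbar = (Sbar - phi ν A W B U Kbar Sbar) + phi ν A W B U Kbar Sbar := by abel
    rw [hdec]
    exact hphi.add_posSemidef hphiSbar
  have hne : (Finset.univ : Finset (Fin n)).Nonempty := ⟨⟨0, hn⟩, Finset.mem_univ _⟩
  set ε : ℝ := Finset.univ.inf' hne hSbarPD.1.eigenvalues with hεdef
  have hε : 0 < ε := by
    rw [hεdef, Finset.lt_inf'_iff]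
    exact fun i _ => hSbarPD.eigenvalues_pos i
  have hεle : ∀ i, ε ≤ hSbarPD.1.eigenvalues i := fun i =>
    Finset.inf'_le _ (Finset.mem_univ i)
  set c : ℝ := Finset.univ.sup' hne hS₀.1.eigenvalues with hcdef
  have hcle : ∀ i, hS₀.1.eigenvalues i ≤ c := fun i =>
    Finset.le_sup' _ (Finset.mem_univ i)
  set α : ℝ := max 1 (c / ε) with hαdef
  have hα1 : 1 ≤ α := le_max_left _ _
  have hα0 : 0 ≤ α := by linarith
  have hαεc : c ≤ α * ε := by
    have h := le_max_right 1 (c / ε)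
    calc c = (c / ε) * ε := by field_simp
    _ ≤ α * ε := by nlinarith
  refine ⟨α • Sbar, fun k => ?_⟩
  have key : ∀ k : ℕ, (α • Sbar - (fun X => Pic ν A W B U X)^[k] S₀).PosSemidef ∧
      ((fun X => Pic ν A W B U X)^[k] S₀).PosSemidef := by
    intro k
    induction k with
    | zero =>
      refine ⟨?_, by simpa using hS₀⟩
      simp only [Function.iterate_zero, id_eq]
      have hdec : α • Sbar - S₀ = α • (Sbar - ε • 1) + ((α * ε - c) • 1 + (c • 1 - S₀)) := by
        rw [smul_sub, smul_smul, sub_smul]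
        abel
      rw [hdec]
      refine (psd_smul (herm_sub_smul_one hSbarPD.1 hεle) hα0).add ?_
      refine (psd_smul Matrix.PosSemidef.one (by linarith)).add ?_
      exact smul_one_sub_herm hS₀.1 hcle
    | succ k ih =>
      obtain ⟨ihb, ihp⟩ := ih
      rw [Function.iterate_succ_apply']
      set S := (fun X => Pic ν A W B U X)^[k] S₀ with hSdef
      constructor
      · have e1 : (phi ν A W B U Kbar S - Pic ν A W B U S).PosSemidef :=
          phi_sub_Pic hν A W B U hU Kbar ihp
        have e2 : (phi ν A W B U Kbar (α • Sbar) - phi ν A W B U Kbar S).PosSemidef :=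
          phi_monotone A W B U Kbar ihb
        have e3 : (α • phi ν A W B U Kbar Sbar - phi ν A W B U Kbar (α • Sbar)).PosSemidef :=
          phi_scaling A W B U hW hU.posSemidef Kbar Sbar hα1
        have e4 : (α • (Sbar - phi ν A W B U Kbar Sbar)).PosSemidef :=
          psd_smul hphi.posSemidef hα0
        have hdec : α • Sbar - Pic ν A W B U S
            = α • (Sbar - phi ν A W B U Kbar Sbar)
              + (α • phi ν A W B U Kbar Sbar - phi ν A W B U Kbar (α • Sbar))
              + (phi ν A W B U Kbar (α • Sbar) - phi ν A W B U Kbar S)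
              + (phi ν A W B U Kbar S - Pic ν A W B U S) := by
          rw [smul_sub]
          abel
        rw [hdec]
        exact ((e4.add e3).add e2).add e1
      · exact Pic_posSemidef hν A W B U hW hU ihp
  exact (key k).1
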